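/- Let S ⊆ ℝ be a convex set with nonempty interior and A : ℝ → ℝ a function that is convex on S, differentiable on the interior of S, and steep: |A'(μ_k)| → ∞ for every sequence μ_k in the interior of S converging to a finite boundary point of S. Define D(β) := sup_{μ ∈ S} (β·μ − A(μ)). Suppose β₀ := sup{β ∈ ℝ : D(β) < ∞} is finite and D(β₀) < ∞. Then S is unbounded above, A'(μ) increases to β₀ as μ → +∞ through the interior of S, and μ·β₀ − A(μ) → D(β₀) as μ → +∞. -/

import Mathlib

open Filter Set
open scoped Topology

noncomputable section

/-- The Legendre transform `D(β) = sup_{μ ∈ S} (β·μ − A(μ))` of `A` restricted to `S`,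
valued in the extended reals. -/
def legendre (S : Set ℝ) (A : ℝ → ℝ) (β : ℝ) : EReal :=
  ⨆ μ ∈ S, ((β * μ - A μ : ℝ) : EReal)

lemma le_legendre {S : Set ℝ} {A : ℝ → ℝ} {β μ : ℝ} (hμ : μ ∈ S) :
    ((β * μ - A μ : ℝ) : EReal) ≤ legendre S A β :=
  le_iSup₂ (f := fun μ (_ : μ ∈ S) => ((β * μ - A μ : ℝ) : EReal)) μ hμ

lemma legendre_le_of_forall {S : Set ℝ} {A : ℝ → ℝ} {β r : ℝ}
    (h : ∀ μ ∈ S, β * μ - A μ ≤ r) : legendre S A β ≤ (r : EReal) := by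
  refine iSup₂_le fun μ hμ => ?_
  exact_mod_cast h μ hμ

lemma legendre_eq_top {S : Set ℝ} {A : ℝ → ℝ} {β : ℝ}
    (h : ∀ r : ℝ, ∃ μ ∈ S, r < β * μ - A μ) : legendre S A β = ⊤ := by
  rw [EReal.eq_top_iff_forall_lt]
  intro y
  obtain ⟨μ, hμ, hy⟩ := h y
  exact lt_of_lt_of_le (by exact_mod_cast hy) (le_legendre hμ)

/-- Let `S ⊆ ℝ` be convex with nonempty interior and `A : ℝ → ℝ` convex on
`S`, differentiable on the interior of `S` (with derivative `A'`) and steep, and let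
`D(β) = sup_{μ ∈ S}(βμ − A(μ))`. Suppose `β₀ = sup{β : D(β) < ∞}` is finite (the set is
nonempty and bounded above) and `D(β₀) < ∞`. Then `S` is unbounded above, `A'` increases to
`β₀` as `μ → +∞` through the interior of `S`, and `μβ₀ − A(μ) → D(β₀)` as `μ → +∞`. -/
theorem stmt11 (S : Set ℝ) (A A' : ℝ → ℝ)
    (hSconv : Convex ℝ S) (hSint : (interior S).Nonempty)
    (hAconv : ConvexOn ℝ S A)
    (hderiv : ∀ μ ∈ interior S, HasDerivAt A (A' μ) μ)
    (hsteep : ∀ μs : ℕ → ℝ, (∀ k, μs k ∈ interior S) → ∀ μ₀ ∈ frontier S,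
      Tendsto μs atTop (𝓝 μ₀) → Tendsto (fun k => |A' (μs k)|) atTop atTop)
    (hne : {b : ℝ | legendre S A b ≠ ⊤}.Nonempty)
    (hbdd : BddAbove {b : ℝ | legendre S A b ≠ ⊤})
    (hfin : legendre S A (sSup {b : ℝ | legendre S A b ≠ ⊤}) ≠ ⊤) :
    ¬BddAbove S ∧
    MonotoneOn A' (interior S) ∧
    Tendsto A' atTop (𝓝 (sSup {b : ℝ | legendre S A b ≠ ⊤})) ∧
    Tendsto (fun μ : ℝ => ((μ * sSup {b : ℝ | legendre S A b ≠ ⊤} - A μ : ℝ) : EReal))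
      atTop (𝓝 (legendre S A (sSup {b : ℝ | legendre S A b ≠ ⊤}))) := by
  set T : Set ℝ := {b : ℝ | legendre S A b ≠ ⊤} with hT
  set β₀ : ℝ := sSup T with hβ₀
  obtain ⟨x, hx⟩ := hSint
  have hxS : x ∈ S := interior_subset hx
  have hSne : S.Nonempty := ⟨x, hxS⟩
  obtain ⟨β₁, hβ₁⟩ := hne
  have hβ₁T : β₁ ∈ T := hβ₁
  have hβ₁le : β₁ ≤ β₀ := le_csSup hbdd hβ₁T
  -- a uniform bound for β₁
  have hβ₁bot : legendre S A β₁ ≠ ⊥ := by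
    intro h
    have h2 := le_legendre (A := A) (β := β₁) hxS
    rw [h, le_bot_iff] at h2
    exact EReal.coe_ne_bot _ h2
  set r₁ : ℝ := (legendre S A β₁).toReal with hr₁
  have hr₁eq : ((r₁ : ℝ) : EReal) = legendre S A β₁ := EReal.coe_toReal hβ₁ hβ₁bot
  have hbound₁ : ∀ μ ∈ S, β₁ * μ - A μ ≤ r₁ := by
    intro μ hμ
    have := le_legendre (A := A) (β := β₁) hμ
    rw [← hr₁eq] at this
    exact_mod_cast this
  -- Step 1 : S is not bounded above
  have hub : ¬BddAbove S := by
    rintro ⟨M, hM⟩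
    have hmem : β₀ + 1 ∈ T := by
      have : legendre S A (β₀ + 1) ≤ ((r₁ + (β₀ + 1 - β₁) * M : ℝ) : EReal) := by
        refine legendre_le_of_forall fun μ hμ => ?_
        have h1 : β₁ * μ - A μ ≤ r₁ := hbound₁ μ hμ
        have h2 : μ ≤ M := hM hμ
        have h3 : (β₀ + 1 - β₁) * μ ≤ (β₀ + 1 - β₁) * M :=
          mul_le_mul_of_nonneg_left h2 (by linarith)
        nlinarith
      intro htop
      rw [htop, top_le_iff] at this
      exact EReal.coe_ne_top _ this
    have := le_csSup hbdd hmem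
    linarith
  have hub' : ∀ y : ℝ, ∃ z ∈ S, y < z := by
    intro y
    by_contra h
    push_neg at h
    exact hub ⟨y, fun z hz => (h z hz)⟩
  -- the interior contains (x, ∞)
  have hIoi : Ioi x ⊆ interior S := by
    intro y hy
    obtain ⟨z, hzS, hz⟩ := hub' y
    have hxy : x < y := hy
    have hyz : y < z := hz
    have hxz : x < z := hxy.trans hyz
    have ha : (0:ℝ) < (z - y) / (z - x) := by
      apply div_pos <;> linarith
    have hb : (0:ℝ) ≤ (y - x) / (z - x) := by
      apply div_nonneg <;> linarith
    have hzx : z - x ≠ 0 := sub_ne_zero.mpr hxz.ne'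
    have hab : (z - y) / (z - x) + (y - x) / (z - x) = 1 := by
      rw [← add_div]
      rw [show z - y + (y - x) = z - x by ring, div_self hzx]
    have := hSconv.combo_interior_self_mem_interior hx hzS ha hb hab
    have hcombo : ((z - y) / (z - x)) • x + ((y - x) / (z - x)) • z = y := by
      rw [smul_eq_mul, smul_eq_mul, div_mul_eq_mul_div, div_mul_eq_mul_div, ← add_div,
        div_eq_iff hzx]
      ring
    rwa [hcombo] at this
  -- Step 2 : monotonicity of A' on the interior
  have hmono : MonotoneOn A' (interior S) := by
    intro u hu v hv huv
    rcases eq_or_lt_of_le huv with rfl | huv'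
    · exact le_rfl
    calc A' u ≤ slope A u v := hAconv.le_slope_of_hasDerivAt
          (interior_subset hu) (interior_subset hv) huv' (hderiv u hu)
      _ ≤ A' v := hAconv.slope_le_of_hasDerivAt
          (interior_subset hu) (interior_subset hv) huv' (hderiv v hv)
  -- Step 3 : supporting-line bound : A' μ ≤ β₀ on the interior
  have hsupport : ∀ μ ∈ interior S, ∀ ν ∈ S, A' μ * ν - A ν ≤ A' μ * μ - A μ := by
    intro μ hμ ν hν
    have hμS : μ ∈ S := interior_subset hμ
    rcases lt_trichotomy ν μ with h | rfl | h
    · have hs : slope A ν μ ≤ A' μ :=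
        hAconv.slope_le_of_hasDerivAt hν hμS h (hderiv μ hμ)
      rw [slope_def_field] at hs
      have hd : (0:ℝ) < μ - ν := by linarith
      rw [div_le_iff₀ hd] at hs
      nlinarith
    · exact le_rfl
    · have hs : A' μ ≤ slope A μ ν :=
        hAconv.le_slope_of_hasDerivAt hμS hν h (hderiv μ hμ)
      rw [slope_def_field] at hs
      have hd : (0:ℝ) < ν - μ := by linarith
      rw [le_div_iff₀ hd] at hs
      nlinarith
  have hA'le : ∀ μ ∈ interior S, A' μ ≤ β₀ := by
    intro μ hμ
    have : legendre S A (A' μ) ≠ ⊤ := by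
      intro htop
      have := legendre_le_of_forall (hsupport μ hμ)
      rw [htop, top_le_iff] at this
      exact EReal.coe_ne_top _ this
    exact le_csSup hbdd this
  -- Step 4 : for any L < β₀ there is an interior point with A' μ > L
  have hexceed : ∀ L : ℝ, L < β₀ → ∃ μ ∈ interior S, L < A' μ := by
    intro L hL
    by_contra h
    push_neg at h
    -- then A ≤ affine line of slope L on (x, ∞), making D(β₀) = ⊤
    have hAbd : ∀ μ ∈ Ioi x, A μ ≤ A x + L * (μ - x) := by
      intro μ hμ
      have hμi : μ ∈ interior S := hIoi hμ
      have hs : slope A x μ ≤ A' μ :=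
        hAconv.slope_le_of_hasDerivAt hxS (interior_subset hμi) hμ (hderiv μ hμi)
      rw [slope_def_field] at hs
      have hd : (0:ℝ) < μ - x := by linarith [mem_Ioi.mp hμ]
      rw [div_le_iff₀ hd] at hs
      have := h μ hμi
      nlinarith
    have htop : legendre S A β₀ = ⊤ := by
      apply legendre_eq_top
      intro r
      set d : ℝ := β₀ - L with hd
      have hdpos : (0:ℝ) < d := by linarith
      set μ : ℝ := max (x + 1) ((r - L * x + A x + 1) / d) with hμdef
      have hμ1 : x + 1 ≤ μ := le_max_left _ _
      have hμIoi : μ ∈ Ioi x := by simp only [mem_Ioi]; linarith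
      refine ⟨μ, interior_subset (hIoi hμIoi), ?_⟩
      have hμ2 : (r - L * x + A x + 1) / d ≤ μ := le_max_right _ _
      have hμ2' : r - L * x + A x + 1 ≤ d * μ := by
        rw [div_le_iff₀ hdpos] at hμ2; linarith [hμ2]
      have hAμ := hAbd μ hμIoi
      have hdμ : d * μ = β₀ * μ - L * μ := by rw [hd]; ring
      nlinarith
    exact hfin htop
  -- Step 5 : A' → β₀
  have hA'lim : Tendsto A' atTop (𝓝 β₀) := by
    rw [tendsto_order]
    constructor
    · intro b hb
      obtain ⟨μ₁, hμ₁, hbμ₁⟩ := hexceed b hb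
      filter_upwards [eventually_gt_atTop (max x μ₁)] with μ hμ
      have hμi : μ ∈ interior S := hIoi (lt_of_le_of_lt (le_max_left _ _) hμ)
      have : A' μ₁ ≤ A' μ :=
        hmono hμ₁ hμi (le_of_lt (lt_of_le_of_lt (le_max_right _ _) hμ))
      linarith
    · intro b hb
      filter_upwards [eventually_gt_atTop x] with μ hμ
      exact lt_of_le_of_lt (hA'le μ (hIoi hμ)) hb
  -- Step 6 : monotonicity of μ ↦ μβ₀ − Aμ on the interior
  have hfmono : ∀ u ∈ interior S, ∀ v ∈ interior S, u ≤ v →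
      u * β₀ - A u ≤ v * β₀ - A v := by
    intro u hu v hv huv
    rcases eq_or_lt_of_le huv with rfl | huv'
    · exact le_rfl
    have hs : slope A u v ≤ A' v :=
      hAconv.slope_le_of_hasDerivAt (interior_subset hu) (interior_subset hv) huv'
        (hderiv v hv)
    rw [slope_def_field] at hs
    have hd : (0:ℝ) < v - u := by linarith
    rw [div_le_iff₀ hd] at hs
    have hvle := hA'le v hv
    nlinarith
  -- any value of f on S is dominated by values at large interior points
  have hkey : ∀ ν ∈ S, ∀ μ ∈ interior S, ν < μ → ν * β₀ - A ν ≤ μ * β₀ - A μ := by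
    intro ν hν μ hμ hνμ
    -- pick y ∈ interior S with y > μ
    set y : ℝ := max (x + 1) (μ + 1) with hy
    have hyi : y ∈ interior S := hIoi (by simp only [mem_Ioi]; exact lt_of_lt_of_le (by linarith) (le_max_left _ _))
    have hμy : μ < y := lt_of_lt_of_le (by linarith) (le_max_right _ _)
    have hfy : μ * β₀ - A μ ≤ y * β₀ - A y := hfmono μ hμ y hyi hμy.le
    -- convex combination : μ = t·ν + (1−t)·y
    set t : ℝ := (y - μ) / (y - ν) with ht
    have hνy : ν < y := hνμ.trans hμy
    have htpos : (0:ℝ) < t := by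
      apply div_pos <;> linarith
    have ht1 : (0:ℝ) < 1 - t := by
      rw [ht]
      have : (y - μ) / (y - ν) < 1 := by
        rw [div_lt_one (by linarith)]; linarith
      linarith
    have hab : t + (1 - t) = 1 := by ring
    have hyν : y - ν ≠ 0 := sub_ne_zero.mpr hνy.ne'
    have hcombo : t • ν + (1 - t) • y = μ := by
      rw [smul_eq_mul, smul_eq_mul, ht]
      field_simp
      ring
    have hAc := hAconv.2 hν (interior_subset hyi) htpos.le ht1.le hab
    rw [hcombo] at hAc
    rw [smul_eq_mul, smul_eq_mul] at hAc
    -- A μ ≤ t A ν + (1−t) A y ; combine with linearity of μβ₀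
    have hlin : μ * β₀ = t * (ν * β₀) + (1 - t) * (y * β₀) := by
      rw [← hcombo]; simp only [smul_eq_mul]; ring
    have h1 : t * (ν * β₀ - A ν) + (1 - t) * (y * β₀ - A y) ≤ μ * β₀ - A μ := by
      nlinarith
    nlinarith
  -- Step 7 : the limit of μβ₀ − Aμ
  have hbot : legendre S A β₀ ≠ ⊥ := by
    intro h
    have h2 := le_legendre (A := A) (β := β₀) hxS
    rw [h, le_bot_iff] at h2
    exact EReal.coe_ne_bot _ h2
  set r : ℝ := (legendre S A β₀).toReal with hr
  have hreq : ((r : ℝ) : EReal) = legendre S A β₀ := EReal.coe_toReal hfin hbot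
  have hle_r : ∀ μ ∈ S, β₀ * μ - A μ ≤ r := by
    intro μ hμ
    have := le_legendre (A := A) (β := β₀) hμ
    rw [← hreq] at this
    exact_mod_cast this
  have hftend : Tendsto (fun μ : ℝ => μ * β₀ - A μ) atTop (𝓝 r) := by
    rw [tendsto_order]
    constructor
    · intro b hb
      -- there is ν ∈ S with b < β₀ν − Aν
      have : ∃ ν ∈ S, b < β₀ * ν - A ν := by
        by_contra h
        push_neg at h
        have := legendre_le_of_forall h
        rw [← hreq] at this
        exact absurd (by exact_mod_cast this) (not_le.mpr hb)
      obtain ⟨ν, hν, hbν⟩ := this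
      filter_upwards [eventually_gt_atTop (max x ν)] with μ hμ
      have hμi : μ ∈ interior S := hIoi (lt_of_le_of_lt (le_max_left _ _) hμ)
      have hνμ : ν < μ := lt_of_le_of_lt (le_max_right _ _) hμ
      have := hkey ν hν μ hμi hνμ
      nlinarith
    · intro b hb
      filter_upwards [eventually_gt_atTop x] with μ hμ
      have := hle_r μ (interior_subset (hIoi hμ))
      nlinarith
  have hftendE : Tendsto (fun μ : ℝ => ((μ * β₀ - A μ : ℝ) : EReal)) atTop
      (𝓝 (legendre S A β₀)) := by
    rw [← hreq]
    exact (EReal.tendsto_coe).mpr hftend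
  exact ⟨hub, hmono, hA'lim, hftendE⟩

end
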